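/- In a B2-category with medial, for all maps f : A → C, g : A → D, h : B → C, k : B → D, the equation [⟨f,g⟩, ⟨h,k⟩] = ⟨[f,h], [g,k]⟩ : A∨B → C∧D holds, where ⟨·,·⟩ is pairing via Δ and [·,·] is copairing via ∇. -/

import Mathlib

open CategoryTheory CategoryTheory.MonoidalCategory

universe v u

/-- The canonical "middle-exchange" map `(A∧B)∧(X∧Y) ⟶ (A∧X)∧(B∧Y)` for the
`∧`-monoidal structure (i.e. `id ∧ σ ∧ id` up to coherence). -/
def exch {C : Type u} [Category.{v} C] [MonoidalCategory C] [SymmetricCategory C]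
    (A B X Y : C) : (A ⊗ B) ⊗ (X ⊗ Y) ⟶ (A ⊗ X) ⊗ (B ⊗ Y) :=
  (α_ A B (X ⊗ Y)).hom ≫ (𝟙 A ⊗ₘ (α_ B X Y).inv) ≫
    (𝟙 A ⊗ₘ ((β_ B X).hom ⊗ₘ 𝟙 Y)) ≫ (𝟙 A ⊗ₘ (α_ X B Y).hom) ≫ (α_ A X (B ⊗ Y)).inv

/-- A second symmetric monoidal structure (the "disjunction" `∨` with unit `f`)
on a category, given as explicit data with the usual naturality and coherence
axioms of a symmetric monoidal category. -/
structure VStr (C : Type u) [Category.{v} C] where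
  vee : C → C → C
  vHom : ∀ {A B X Y : C}, (A ⟶ B) → (X ⟶ Y) → (vee A X ⟶ vee B Y)
  bot : C
  vHom_id : ∀ A B : C, vHom (𝟙 A) (𝟙 B) = 𝟙 (vee A B)
  vHom_comp : ∀ {A B X Y Z W : C} (f : A ⟶ B) (g : B ⟶ X) (h : Y ⟶ Z) (k : Z ⟶ W),
    vHom (f ≫ g) (h ≫ k) = vHom f h ≫ vHom g k
  vassoc : ∀ A B X : C, vee (vee A B) X ≅ vee A (vee B X)
  vbraid : ∀ A B : C, vee A B ≅ vee B A
  vrunit : ∀ A : C, vee A bot ≅ A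
  vlunit : ∀ A : C, vee bot A ≅ A
  vassoc_nat : ∀ {A B X A' B' X' : C} (f : A ⟶ A') (g : B ⟶ B') (h : X ⟶ X'),
    vHom (vHom f g) h ≫ (vassoc A' B' X').hom = (vassoc A B X).hom ≫ vHom f (vHom g h)
  vbraid_nat : ∀ {A B A' B' : C} (f : A ⟶ A') (g : B ⟶ B'),
    vHom f g ≫ (vbraid A' B').hom = (vbraid A B).hom ≫ vHom g f
  vrunit_nat : ∀ {A A' : C} (f : A ⟶ A'),
    vHom f (𝟙 bot) ≫ (vrunit A').hom = (vrunit A).hom ≫ f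
  vlunit_nat : ∀ {A A' : C} (f : A ⟶ A'),
    vHom (𝟙 bot) f ≫ (vlunit A').hom = (vlunit A).hom ≫ f
  vpentagon : ∀ A B X Y : C,
    (vassoc (vee A B) X Y).hom ≫ (vassoc A B (vee X Y)).hom =
      vHom (vassoc A B X).hom (𝟙 Y) ≫ (vassoc A (vee B X) Y).hom ≫
        vHom (𝟙 A) (vassoc B X Y).hom
  vhexagon : ∀ A B X : C,
    (vassoc A B X).hom ≫ (vbraid A (vee B X)).hom ≫ (vassoc B X A).hom =
      vHom (vbraid A B).hom (𝟙 X) ≫ (vassoc B A X).hom ≫ vHom (𝟙 B) (vbraid A X).hom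
  vtriangle : ∀ A B : C,
    (vassoc A bot B).hom ≫ vHom (𝟙 A) (vlunit B).hom = vHom (vrunit A).hom (𝟙 B)
  vsymm : ∀ A B : C, (vbraid A B).hom ≫ (vbraid B A).hom = 𝟙 (vee A B)

namespace VStr

variable {C : Type u} [Category.{v} C] (S : VStr C)

/-- The middle-exchange map `(A∨B)∨(X∨Y) ⟶ (A∨X)∨(B∨Y)` for the `∨`-structure. -/
def vexch (A B X Y : C) :
    S.vee (S.vee A B) (S.vee X Y) ⟶ S.vee (S.vee A X) (S.vee B Y) :=
  (S.vassoc A B (S.vee X Y)).hom ≫ S.vHom (𝟙 A) (S.vassoc B X Y).inv ≫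
    S.vHom (𝟙 A) (S.vHom (S.vbraid B X).hom (𝟙 Y)) ≫
    S.vHom (𝟙 A) (S.vassoc X B Y).hom ≫ (S.vassoc A X (S.vee B Y)).inv

end VStr

/-- A `B2`-category structure (without the `*`-autonomous negation): two
symmetric monoidal structures `∧` (the ambient one) and `∨` (given by a
`VStr`), cocommutative `∧`-comonoids `(Δ, Π)` and commutative `∨`-monoids
`(∇, ⊓)` on every object, satisfying the axioms B2a, B2c and their duals. -/
structure B2 (C : Type u) [Category.{v} C] [MonoidalCategory C] [SymmetricCategory C]
    extends VStr C where
  Δ : ∀ A : C, A ⟶ A ⊗ A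
  Pi : ∀ A : C, A ⟶ 𝟙_ C
  coassoc : ∀ A : C, Δ A ≫ (Δ A ⊗ₘ 𝟙 A) ≫ (α_ A A A).hom = Δ A ≫ (𝟙 A ⊗ₘ Δ A)
  cocomm : ∀ A : C, Δ A ≫ (β_ A A).hom = Δ A
  counit_r : ∀ A : C, Δ A ≫ (𝟙 A ⊗ₘ Pi A) ≫ (ρ_ A).hom = 𝟙 A
  counit_l : ∀ A : C, Δ A ≫ (Pi A ⊗ₘ 𝟙 A) ≫ (λ_ A).hom = 𝟙 A
  nab : ∀ A : C, vee A A ⟶ A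
  cap : ∀ A : C, bot ⟶ A
  vcoassoc : ∀ A : C, (vassoc A A A).hom ≫ vHom (𝟙 A) (nab A) ≫ nab A =
    vHom (nab A) (𝟙 A) ≫ nab A
  vcomm : ∀ A : C, (vbraid A A).hom ≫ nab A = nab A
  vunit_r : ∀ A : C, (vrunit A).inv ≫ vHom (𝟙 A) (cap A) ≫ nab A = 𝟙 A
  vunit_l : ∀ A : C, (vlunit A).inv ≫ vHom (cap A) (𝟙 A) ≫ nab A = 𝟙 A
  B2a : Pi (𝟙_ C) = 𝟙 (𝟙_ C)
  B2c : ∀ A B : C, Δ (A ⊗ B) = (Δ A ⊗ₘ Δ B) ≫ exch A A B B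
  B2a' : cap bot = 𝟙 bot
  B2c' : ∀ A B : C, nab (vee A B) = toVStr.vexch A B A B ≫ vHom (nab A) (nab B)

/-- A `B2`-category with a natural medial map satisfying B3c and its dual B3c'. -/
structure B2M (C : Type u) [Category.{v} C] [MonoidalCategory C] [SymmetricCategory C]
    extends B2 C where
  med : ∀ A B X Y : C, vee (A ⊗ B) (X ⊗ Y) ⟶ (vee A X) ⊗ (vee B Y)
  med_nat : ∀ {A B X Y A' B' X' Y' : C}
    (f : A ⟶ A') (g : B ⟶ B') (h : X ⟶ X') (k : Y ⟶ Y'),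
    vHom (f ⊗ₘ g) (h ⊗ₘ k) ≫ med A' B' X' Y' = med A B X Y ≫ (vHom f h ⊗ₘ vHom g k)
  B3c : ∀ A B : C, Δ (vee A B) = vHom (Δ A) (Δ B) ≫ med A A B B
  B3c' : ∀ A B : C, nab (A ⊗ B) = med A B A B ≫ (nab A ⊗ₘ nab B)

/-- In a `B2`-category with medial, copairing of pairings equals pairing of
copairings: `[⟨f,g⟩,⟨h,k⟩] = ⟨[f,h],[g,k]⟩ : A∨B ⟶ C∧D`, where
`⟨f,g⟩ = (f∧g)∘Δ` and `[f,h] = ∇∘(f∨h)`. -/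
theorem stmt9 {C : Type u} [Category.{v} C] [MonoidalCategory C] [SymmetricCategory C]
    (S : B2M C) :
    ∀ {A B X Y : C} (f : A ⟶ X) (g : A ⟶ Y) (h : B ⟶ X) (k : B ⟶ Y),
      S.vHom (S.Δ A ≫ (f ⊗ₘ g)) (S.Δ B ≫ (h ⊗ₘ k)) ≫ S.nab (X ⊗ Y) =
        S.Δ (S.vee A B) ≫ ((S.vHom f h ≫ S.nab X) ⊗ₘ (S.vHom g k ≫ S.nab Y)) := by
  intro A B X Y f g h k
  rw [S.vHom_comp, S.B3c', Category.assoc, ← Category.assoc (S.vHom (f ⊗ₘ g) (h ⊗ₘ k)), S.med_nat, ← Category.assoc, ← Category.assoc, ← S.B3c]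
  simp [MonoidalCategory.tensorHom_comp_tensorHom]
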